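/- arXiv:1009.6140 — 8 statements merged into one kernel-verified Lean document; each statement's English description precedes it below -/
import Mathlib

section
/- Let G be a torsion-free group, C ⊆ G finite nonempty, n ≥ 1, and U an n-atom for C. Then for every g ∈ G with g ≠ 1, |U ∩ gU| ≤ n - 1. -/
open Pointwise

/-- `V` is an `n`-fragment for `C`: `|V| ≥ n` and `|VC| - |V|` attains the minimum
`κ_n(C) = min {|XC| - |X| : X ⊆ G finite, |X| ≥ n}`. -/
def IsNFragment {G : Type*} [Group G] [DecidableEq G] (n : ℕ) (C V : Finset G) : Prop :=
  n ≤ V.card ∧ ∀ X : Finset G, n ≤ X.card →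
    ((V * C).card : ℤ) - V.card ≤ ((X * C).card : ℤ) - X.card

/-- `U` is an `n`-atom for `C`: an `n`-fragment of minimal cardinality. -/
def IsNAtom {G : Type*} [Group G] [DecidableEq G] (n : ℕ) (C U : Finset G) : Prop :=
  IsNFragment n C U ∧ ∀ V : Finset G, IsNFragment n C V → U.card ≤ V.card

/-- Hamidoune's intersection lemma: if `U` is an `n`-atom and `F` an `n`-fragment
with `|U ∩ F| ≥ n`, then `U ⊆ F`. -/
lemma atom_subset_of_inter_card {G : Type*} [Group G] [DecidableEq G]
    {n : ℕ} {C U F : Finset G} (hU : IsNAtom n C U) (hF : IsNFragment n C F)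
    (h : n ≤ (U ∩ F).card) : U ⊆ F := by
  obtain ⟨⟨hUn, hUmin⟩, hUatom⟩ := hU
  obtain ⟨hFn, hFmin⟩ := hF
  have hB : n ≤ (U ∪ F).card :=
    le_trans hUn (Finset.card_le_card Finset.subset_union_left)
  have hA := hUmin (U ∩ F) h
  have hBk := hUmin (U ∪ F) hB
  have hκF := hFmin U hUn
  have hsub1 : ((U ∩ F) * C).card + ((U ∪ F) * C).card ≤ (U * C).card + (F * C).card := by
    have h1 : (U ∩ F) * C ⊆ (U * C) ∩ (F * C) :=
      Finset.subset_inter (Finset.mul_subset_mul_right Finset.inter_subset_left)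
        (Finset.mul_subset_mul_right Finset.inter_subset_right)
    have h2 : (U ∪ F) * C = (U * C) ∪ (F * C) := Finset.union_mul
    calc ((U ∩ F) * C).card + ((U ∪ F) * C).card
        ≤ ((U * C) ∩ (F * C)).card + ((U * C) ∪ (F * C)).card := by
          rw [h2]; exact Nat.add_le_add_right (Finset.card_le_card h1) _
      _ = (U * C).card + (F * C).card := Finset.card_inter_add_card_union _ _
  have hcards : (U ∩ F).card + (U ∪ F).card = U.card + F.card :=
    Finset.card_inter_add_card_union U F
  have hAeq : (((U ∩ F) * C).card : ℤ) - (U ∩ F).card = ((U * C).card : ℤ) - U.card := by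
    have h1 : (((U ∩ F) * C).card : ℤ) + ((U ∪ F) * C).card ≤ (U * C).card + (F * C).card := by
      exact_mod_cast hsub1
    have h2 : ((U ∩ F).card : ℤ) + (U ∪ F).card = U.card + F.card := by exact_mod_cast hcards
    linarith
  have hAfrag : IsNFragment n C (U ∩ F) := by
    refine ⟨h, fun X hX => ?_⟩
    rw [hAeq]; exact hUmin X hX
  have := hUatom (U ∩ F) hAfrag
  have heq : U ∩ F = U :=
    Finset.eq_of_subset_of_card_le Finset.inter_subset_left this
  rw [← heq]; exact Finset.inter_subset_right

theorem stmt1 {G : Type*} [Group G] [DecidableEq G]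
    (hG : ∀ g : G, g ≠ 1 → ¬IsOfFinOrder g) (n : ℕ) (hn : 1 ≤ n)
    (C : Finset G) (hC : C.Nonempty) (U : Finset G) (hU : IsNAtom n C U)
    (g : G) (hg : g ≠ 1) :
    (U ∩ g • U).card ≤ n - 1 := by
  by_contra hlt
  push_neg at hlt
  have hcard : n ≤ (U ∩ g • U).card := by omega
  have hF : IsNFragment n C (g • U) := by
    obtain ⟨⟨hUn, hUmin⟩, _⟩ := hU
    refine ⟨by simpa [Finset.card_smul_finset] using hUn, fun X hX => ?_⟩
    have hmul : (g • U) * C = g • (U * C) := smul_mul_assoc g U C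
    rw [hmul, Finset.card_smul_finset, Finset.card_smul_finset]
    exact hUmin X hX
  have hsub : U ⊆ g • U := atom_subset_of_inter_card hU hF hcard
  have heq : U = g • U :=
    Finset.eq_of_subset_of_card_le hsub (by simp [Finset.card_smul_finset])
  have hne : U.Nonempty := Finset.card_pos.mp (lt_of_lt_of_le (by omega) hU.1.1)
  obtain ⟨u, hu⟩ := hne
  have key : ∀ k : ℕ, g ^ k • U = U := by
    intro k
    induction k with
    | zero => simp
    | succ k ih => rw [pow_succ', mul_smul, ih, ← heq]
  have hmem : ∀ k : ℕ, g ^ k * u ∈ U := by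
    intro k
    have := Finset.smul_mem_smul_finset (a := g ^ k) hu
    rwa [key k, smul_eq_mul] at this
  obtain ⟨i, hi, j, hj, hij, hpow⟩ :=
    Finset.exists_ne_map_eq_of_card_lt_of_maps_to
      (s := Finset.range (U.card + 1)) (t := U)
      (by simp) (fun k _ => hmem k)
  have hgg : g ^ i = g ^ j := mul_right_cancel hpow
  have habs : ∀ a b : ℕ, a < b → g ^ a = g ^ b → False := by
    intro a b hab he
    have h1 : g ^ a * g ^ (b - a) = g ^ b := by
      rw [← pow_add]; congr 1; omega
    rw [← he] at h1
    have h2 : g ^ (b - a) = 1 := by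
      rwa [mul_eq_left] at h1
    exact hG g hg (isOfFinOrder_iff_pow_eq_one.2 ⟨b - a, by omega, h2⟩)
  rcases lt_or_gt_of_ne hij with h | h
  · exact habs i j h hgg
  · exact habs j i h hgg.symm
end

section
/- Let G be a torsion-free group, C ⊆ G finite, n ≥ 1, and U an n-atom for C with |U| > n. Then every element of UC has at least two representations as a product uc with u ∈ U, c ∈ C. -/
open Pointwise

theorem stmt4 {G : Type*} [Group G] [DecidableEq G]
    (hG : ∀ g : G, g ≠ 1 → ¬IsOfFinOrder g) (n : ℕ) (hn : 1 ≤ n)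
    (C : Finset G) (U : Finset G) (hU : IsNAtom n C U) (hcard : n < U.card) :
    ∀ x ∈ U * C, ∃ u₁ ∈ U, ∃ c₁ ∈ C, ∃ u₂ ∈ U, ∃ c₂ ∈ C,
      u₁ * c₁ = x ∧ u₂ * c₂ = x ∧ (u₁, c₁) ≠ (u₂, c₂) := by
  intro x hx
  by_contra hcon
  push_neg at hcon
  obtain ⟨u, hu, c, hc, huc⟩ := Finset.mem_mul.mp hx
  -- uniqueness of the representation
  have huniq : ∀ u' ∈ U, ∀ c' ∈ C, u' * c' = x → (u', c') = (u, c) := by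
    intro u' hu' c' hc' h
    exact hcon u' hu' c' hc' u hu c hc h huc
  set U' := U.erase u with hU'
  have hcardU' : U'.card = U.card - 1 := Finset.card_erase_of_mem hu
  have hUpos : 0 < U.card := lt_of_le_of_lt (Nat.zero_le n) hcard
  have hnU' : n ≤ U'.card := by omega
  -- x ∉ U' * C
  have hxnot : x ∉ U' * C := by
    intro hx'
    obtain ⟨u', hu', c', hc', h⟩ := Finset.mem_mul.mp hx'
    have hu'U : u' ∈ U := Finset.mem_of_mem_erase hu'
    have := huniq u' hu'U c' hc' h
    have : u' = u := (Prod.mk.injEq _ _ _ _ ▸ this).1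
    exact (Finset.ne_of_mem_erase hu') this
  have hsub : U' * C ⊆ (U * C).erase x := by
    intro y hy
    refine Finset.mem_erase.mpr ⟨?_, ?_⟩
    · rintro rfl; exact hxnot hy
    · exact Finset.mul_subset_mul_right (Finset.erase_subset u U) hy
  have hcardmul : (U' * C).card ≤ (U * C).card - 1 := by
    calc (U' * C).card ≤ ((U * C).erase x).card := Finset.card_le_card hsub
    _ = (U * C).card - 1 := Finset.card_erase_of_mem hx
  have hmulpos : 0 < (U * C).card := Finset.card_pos.mpr ⟨x, hx⟩
  -- U' is an n-fragment
  have hfrag : IsNFragment n C U' := by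
    refine ⟨hnU', fun X hX => ?_⟩
    have h1 : ((U' * C).card : ℤ) - U'.card ≤ ((U * C).card : ℤ) - U.card := by
      have : ((U' * C).card : ℤ) ≤ (U * C).card - 1 := by
        have := hcardmul; omega
      have h2 : (U'.card : ℤ) = U.card - 1 := by
        rw [hcardU']; omega
      omega
    exact h1.trans (hU.1.2 X hX)
  have := hU.2 U' hfrag
  omega
end

section
/- Let G be a torsion-free group, C ⊆ G finite with |C| ≥ 3, and U a 2-atom for C. Then |U| ≤ |C| - 1. -/
open Pointwise

/-- The Mathlib (2024) definition of `Monoid.IsTorsionFree`, removed since. -/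
def Monoid.IsTorsionFree (G : Type*) [Monoid G] : Prop :=
  ∀ g : G, g ≠ 1 → ¬IsOfFinOrder g

private lemma smul_finset_mul_eq {G : Type*} [Group G] [DecidableEq G] (g : G)
    (U C : Finset G) : (g • U) * C = g • (U * C) := by
  ext x
  simp only [Finset.mem_mul, Finset.mem_smul_finset, smul_eq_mul]
  constructor
  · rintro ⟨y, hy, z, hz, rfl⟩
    obtain ⟨u, hu, rfl⟩ := hy
    exact ⟨u * z, ⟨u, hu, z, hz, rfl⟩, (mul_assoc _ _ _).symm⟩
  · rintro ⟨y, ⟨u, hu, z, hz, rfl⟩, rfl⟩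
    exact ⟨g * u, ⟨u, hu, rfl⟩, z, hz, mul_assoc _ _ _⟩

/-- A nonempty finite set in a torsion-free group cannot be invariant under
left translation by a nonidentity element. -/
private lemma no_invariant_finset {G : Type*} [Group G] [DecidableEq G]
    (hG : Monoid.IsTorsionFree G) {g : G} (hg : g ≠ 1) {U : Finset G}
    (hne : U.Nonempty) (hinv : g • U = U) : False := by
  obtain ⟨u, hu⟩ := hne
  have key : ∀ n : ℕ, g ^ n * u ∈ U := by
    intro n
    induction n with
    | zero => simpa using hu
    | succ n ih =>
      have : g • ((g ^ n * u : G)) ∈ g • U := Finset.smul_mem_smul_finset ih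
      rw [hinv] at this
      simpa [smul_eq_mul, pow_succ', mul_assoc] using this
  obtain ⟨m, hm, n, hn, hmn, heq⟩ :=
    Finset.exists_ne_map_eq_of_card_lt_of_maps_to
      (s := Finset.range (U.card + 1)) (t := U)
      (by simp) (fun n _ => key n)
  have hpow : g ^ m = g ^ n := mul_right_cancel heq
  have hinj : Function.Injective (fun n : ℕ => g ^ n) :=
    injective_pow_iff_not_isOfFinOrder.2 (hG g hg)
  exact hmn (hinj hpow)

/-- Intersection property of 2-atoms in torsion-free groups:
`|U ∩ gU| ≤ 1` for `g ≠ 1`. -/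
private lemma atom_inter_le_one {G : Type*} [Group G] [DecidableEq G]
    (hG : Monoid.IsTorsionFree G) {C U : Finset G} (hU : IsNAtom 2 C U)
    {g : G} (hg : g ≠ 1) : (U ∩ g • U).card ≤ 1 := by
  by_contra hlt
  push_neg at hlt
  set V := U ∩ g • U with hV
  have hVU : V ⊆ U := Finset.inter_subset_left
  have hVle : V.card ≤ U.card := Finset.card_le_card hVU
  rcases eq_or_lt_of_le hVle with heq | hcardlt
  · -- then U = g • U, contradicting torsion-freeness
    have hVeq : V = U := Finset.eq_of_subset_of_card_le hVU (le_of_eq heq.symm)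
    have hsub : U ⊆ g • U := by
      intro x hx
      have : x ∈ V := hVeq.symm ▸ hx
      exact (Finset.mem_inter.1 this).2
    have hUg : U = g • U :=
      Finset.eq_of_subset_of_card_le hsub (le_of_eq (Finset.card_smul_finset g U))
    have hne : U.Nonempty := Finset.card_pos.1 (by omega)
    exact no_invariant_finset hG hg hne hUg.symm
  · -- V is a 2-fragment of smaller cardinality: contradiction
    have hVcard : 2 ≤ V.card := hlt
    -- submodularity
    have hsub1 : V * C ⊆ (U * C) ∩ (g • (U * C)) := by
      have h1 : V * C ⊆ U * C := Finset.mul_subset_mul_right hVU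
      have h2 : V * C ⊆ (g • U) * C :=
        Finset.mul_subset_mul_right Finset.inter_subset_right
      rw [smul_finset_mul_eq] at h2
      exact Finset.subset_inter h1 h2
    have hUcup : (U ∪ g • U) * C = (U * C) ∪ g • (U * C) := by
      rw [Finset.union_mul, smul_finset_mul_eq]
    have hcup2 : 2 ≤ (U ∪ g • U).card :=
      le_trans hU.1.1 (Finset.card_le_card Finset.subset_union_left)
    have hfrag := hU.1.2 (U ∪ g • U) hcup2
    rw [hUcup] at hfrag
    -- cardinal identities
    have hid1 : ((U * C) ∩ (g • (U * C))).card + ((U * C) ∪ g • (U * C)).card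
        = (U * C).card + (U * C).card := by
      rw [Finset.card_inter_add_card_union, Finset.card_smul_finset]
    have hid2 : V.card + (U ∪ g • U).card = U.card + U.card := by
      rw [hV, Finset.card_inter_add_card_union, Finset.card_smul_finset]
    have hVC : (V * C).card ≤ ((U * C) ∩ (g • (U * C))).card :=
      Finset.card_le_card hsub1
    -- conclude V is a 2-fragment
    have hVfrag : IsNFragment 2 C V := by
      refine ⟨hVcard, fun X hX => ?_⟩
      have hX' := hU.1.2 X hX
      have hkey : ((V * C).card : ℤ) - V.card ≤ ((U * C).card : ℤ) - U.card := by
        omega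
      exact le_trans hkey hX'
    have := hU.2 V hVfrag
    omega

theorem stmt5 {G : Type*} [Group G] [DecidableEq G]
    (hG : Monoid.IsTorsionFree G)
    (C : Finset G) (hC : 3 ≤ C.card) (U : Finset G) (hU : IsNAtom 2 C U) :
    U.card ≤ C.card - 1 := by
  rcases le_or_gt U.card 2 with h2 | h3
  · omega
  -- now 3 ≤ U.card
  have hCne : C.Nonempty := Finset.card_pos.1 (by omega)
  obtain ⟨c₀, hc₀⟩ := hCne
  -- every element u * c₀ has a second representation with a different C-element
  have two_reps : ∀ u ∈ U, ∃ u' ∈ U, ∃ c' ∈ C, u' * c' = u * c₀ ∧ c' ≠ c₀ := by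
    intro u hu
    by_contra hcon
    push_neg at hcon
    -- then u * c₀ has a unique representation; erase u
    have huniq : ∀ a ∈ U, ∀ b ∈ C, a * b = u * c₀ → a = u ∧ b = c₀ := by
      intro a ha b hb hab
      have hb' : b = c₀ := hcon a ha b hb hab
      subst hb'
      exact ⟨mul_right_cancel hab, rfl⟩
    set U' := U.erase u with hU'
    have hU'card : U'.card = U.card - 1 := Finset.card_erase_of_mem hu
    have hsub : U' * C ⊆ (U * C).erase (u * c₀) := by
      intro x hx
      rw [Finset.mem_mul] at hx
      obtain ⟨a, ha, b, hb, rfl⟩ := hx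
      have haU : a ∈ U := Finset.mem_of_mem_erase ha
      refine Finset.mem_erase.2 ⟨?_, Finset.mem_mul.2 ⟨a, haU, b, hb, rfl⟩⟩
      intro habs
      exact (Finset.ne_of_mem_erase ha) (huniq a haU b hb habs).1
    have hmem : u * c₀ ∈ U * C := Finset.mem_mul.2 ⟨u, hu, c₀, hc₀, rfl⟩
    have hcard : (U' * C).card ≤ (U * C).card - 1 := by
      calc (U' * C).card ≤ ((U * C).erase (u * c₀)).card := Finset.card_le_card hsub
        _ = (U * C).card - 1 := Finset.card_erase_of_mem hmem
    have hUCpos : 1 ≤ (U * C).card := Finset.card_pos.2 ⟨u * c₀, hmem⟩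
    have hfrag : IsNFragment 2 C U' := by
      refine ⟨by omega, fun X hX => ?_⟩
      have h1 := hU.1.2 X hX
      have hkey : ((U' * C).card : ℤ) - U'.card ≤ ((U * C).card : ℤ) - U.card := by
        omega
      exact le_trans hkey h1
    have := hU.2 U' hfrag
    omega
  -- build an injection U → C.erase c₀
  have hex : ∀ u : G, ∃ c' : G, u ∈ U →
      c' ∈ C ∧ c' ≠ c₀ ∧ ∃ u' ∈ U, u' * c' = u * c₀ := by
    intro u
    by_cases hu : u ∈ U
    · obtain ⟨u', hu', c', hc', heq, hne⟩ := two_reps u hu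
      exact ⟨c', fun _ => ⟨hc', hne, u', hu', heq⟩⟩
    · exact ⟨1, fun h => absurd h hu⟩
  choose f hf using hex
  have hmaps : ∀ u ∈ U, f u ∈ C.erase c₀ := by
    intro u hu
    obtain ⟨h1, h2, _⟩ := hf u hu
    exact Finset.mem_erase.2 ⟨h2, h1⟩
  have hinj : Set.InjOn f U := by
    intro u₁ hu₁' u₂ hu₂' hfe
    have hu₁ : u₁ ∈ U := hu₁'
    have hu₂ : u₂ ∈ U := hu₂'
    by_contra hne
    obtain ⟨hc1, hne1, v₁, hv₁, he₁⟩ := hf u₁ hu₁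
    obtain ⟨hc2, hne2, v₂, hv₂, he₂⟩ := hf u₂ hu₂
    set c := f u₁ with hc
    rw [← hfe] at he₂
    have hv₁' : v₁ = u₁ * c₀ * c⁻¹ := eq_mul_inv_of_mul_eq he₁
    have hv₂' : v₂ = u₂ * c₀ * c⁻¹ := eq_mul_inv_of_mul_eq he₂
    set g := u₂ * u₁⁻¹ with hg
    have hgne : g ≠ 1 := fun h => hne (mul_inv_eq_one.1 h).symm
    -- two distinct elements of U ∩ g • U
    have hmem1 : u₂ ∈ U ∩ g • U := by
      refine Finset.mem_inter.2 ⟨hu₂, ?_⟩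
      refine Finset.mem_smul_finset.2 ⟨u₁, hu₁, ?_⟩
      simp [hg, smul_eq_mul, mul_assoc, inv_mul_cancel_left]
    have hmem2 : v₂ ∈ U ∩ g • U := by
      refine Finset.mem_inter.2 ⟨hv₂, ?_⟩
      refine Finset.mem_smul_finset.2 ⟨v₁, hv₁, ?_⟩
      rw [hv₁', hv₂']
      simp [hg, smul_eq_mul, mul_assoc, inv_mul_cancel_left]
    have hne12 : u₂ ≠ v₂ := by
      rw [hv₂', mul_assoc]
      intro h
      have h1 : c₀ * c⁻¹ = 1 := (left_eq_mul.1 h).symm ▸ rfl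
      exact hne1 ((mul_inv_eq_one.1 h1).symm)
    have h2le : 2 ≤ (U ∩ g • U).card :=
      Finset.one_lt_card.2 ⟨u₂, hmem1, v₂, hmem2, hne12⟩
    have := atom_inter_le_one hG hU hgne
    omega
  have hle := Finset.card_le_card_of_injOn f hmaps hinj
  rwa [Finset.card_erase_of_mem hc₀] at hle
end

section
/- Let G be a torsion-free group, C ⊆ G finite with |C| ≥ 3, U a 2-atom for C, and k ≥ 0 an integer with |UC| ≤ |U| + |C| + k. Then |U| ≤ k + 3. -/
open Pointwise

set_option linter.unusedSectionVars false

section AuxHamidoune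
variable {G : Type*} [Group G] [DecidableEq G]

lemma aux_smul_eq_self (hG : ∀ g : G, g ≠ 1 → ¬IsOfFinOrder g) {A : Finset G} (hA : A.Nonempty)
    {g : G} (h : g • A = A) : g = 1 := by
  by_contra hg
  obtain ⟨v, hv⟩ := hA
  have hmem : ∀ n : ℕ, g ^ n * v ∈ A := by
    intro n
    induction n with
    | zero => simpa using hv
    | succ n ih =>
      have : g • (g ^ n * v) ∈ g • A := Finset.smul_mem_smul_finset ih
      rw [h] at this
      simpa [pow_succ', mul_assoc, smul_eq_mul] using this
  have hmap : ∀ n ∈ Finset.range (A.card + 1), g ^ n * v ∈ A := fun n _ => hmem n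
  obtain ⟨i, hi, j, hj, hij, heq⟩ :=
    Finset.exists_ne_map_eq_of_card_lt_of_maps_to (by simp) hmap
  wlog hlt : i < j generalizing i j
  · exact this j hj i hi hij.symm heq.symm (by omega)
  have hpow : g ^ (j - i) = 1 := by
    have h1 : g ^ i * (g ^ (j - i) * v) = g ^ i * v := by
      rw [← mul_assoc, ← pow_add]
      rw [Nat.add_sub_cancel' (le_of_lt hlt)]
      exact heq.symm
    have h2 : g ^ (j - i) * v = v := mul_left_cancel h1
    have : g ^ (j - i) * v = 1 * v := by simpa using h2
    exact mul_right_cancel this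
  exact hG g hg (isOfFinOrder_iff_pow_eq_one.2 ⟨j - i, by omega, hpow⟩)

lemma atom_left_sidon (hG : ∀ g : G, g ≠ 1 → ¬IsOfFinOrder g) {M A : Finset G} (hA : IsNAtom 2 M A)
    {g : G} (hg : g ≠ 1) : (A ∩ g • A).card ≤ 1 := by
  by_contra hD
  push_neg at hD
  set D := A ∩ g • A with hDdef
  set E := A ∪ g • A with hEdef
  have hDA : D ⊆ A := Finset.inter_subset_left
  have hgcard : (g • A).card = A.card := Finset.card_smul_finset g A
  have hDE : E.card + D.card = A.card + (g • A).card := Finset.card_union_add_card_inter A (g • A)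
  have hEM : E * M = (A * M) ∪ (g • A) * M := Finset.union_mul
  have hgAM : (g • A) * M = g • (A * M) := smul_mul_assoc g A M
  have hgAMcard : ((g • A) * M).card = (A * M).card := by rw [hgAM, Finset.card_smul_finset]
  have hDMsub : D * M ⊆ (A * M) ∩ ((g • A) * M) := Finset.inter_mul_subset
  have hcards : (D * M).card + (E * M).card ≤ 2 * (A * M).card := by
    have h1 : (D * M).card ≤ ((A * M) ∩ ((g • A) * M)).card := Finset.card_le_card hDMsub
    have h2 : ((A * M) ∩ ((g • A) * M)).card + ((A * M) ∪ ((g • A) * M)).card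
        = (A * M).card + ((g • A) * M).card := by
      rw [add_comm]; exact Finset.card_union_add_card_inter _ _
    rw [hEM]
    omega
  have hA2 : 2 ≤ A.card := hA.1.1
  have hE2 : 2 ≤ E.card := le_trans hA2 (Finset.card_le_card Finset.subset_union_left)
  have hfragE := hA.1.2 E hE2
  have hDfrag : IsNFragment 2 M D := by
    refine ⟨by omega, fun X hX => ?_⟩
    have h1 := hA.1.2 X hX
    have key : ((D * M).card : ℤ) - D.card ≤ ((A * M).card : ℤ) - A.card := by
      push_cast at hfragE ⊢
      have hc1 : ((E * M).card : ℤ) = (E * M).card := rfl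
      -- combine: DM + EM ≤ 2 AM ; EM - E ≥ AM - A ; E + D = 2A
      have : (E.card : ℤ) + D.card = A.card + (g • A).card := by exact_mod_cast hDE
      have h2 : ((D * M).card : ℤ) + (E * M).card ≤ 2 * (A * M).card := by exact_mod_cast hcards
      have h3 : ((g • A).card : ℤ) = A.card := by exact_mod_cast hgcard
      linarith
    linarith
  have hsize := hA.2 D hDfrag
  have hDeqA : D = A := Finset.eq_of_subset_of_card_le hDA hsize
  have hsub : A ⊆ g • A := by
    intro x hx
    have : x ∈ D := hDeqA.symm ▸ hx
    exact (Finset.mem_inter.1 this).2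
  have hAg : g • A = A :=
    (Finset.eq_of_subset_of_card_le hsub (le_of_eq hgcard)).symm
  exact hg (aux_smul_eq_self hG (Finset.card_pos.1 (by omega)) hAg)

lemma right_sidon_of_left {A : Finset G}
    (hL : ∀ g : G, g ≠ 1 → (A ∩ g • A).card ≤ 1)
    {h : G} (hh : h ≠ 1) : (A ∩ (A * {h})).card ≤ 1 := by
  by_contra hcon
  push_neg at hcon
  obtain ⟨x, hx, y, hy, hxy⟩ := Finset.one_lt_card.1 hcon
  obtain ⟨hxA, hxr⟩ := Finset.mem_inter.1 hx
  obtain ⟨hyA, hyr⟩ := Finset.mem_inter.1 hy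
  obtain ⟨a, ha, c, hc, hac⟩ := Finset.mem_mul.1 hxr
  obtain ⟨b, hb, d, hd, hbd⟩ := Finset.mem_mul.1 hyr
  rw [Finset.mem_singleton] at hc hd
  subst hc hd
  have hab : a ≠ b := by rintro rfl; exact hxy (hac.symm.trans hbd)
  set g := a * b⁻¹ with hgdef
  have hg : g ≠ 1 := by
    intro hg1
    exact hab (by rwa [hgdef, mul_inv_eq_one] at hg1)
  have hxg : x ∈ A ∩ g • A := by
    refine Finset.mem_inter.2 ⟨hxA, ?_⟩
    refine Finset.mem_smul_finset.2 ⟨y, hyA, ?_⟩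
    rw [smul_eq_mul, hgdef, ← hbd, ← hac]
    group
  have hag : a ∈ A ∩ g • A := by
    refine Finset.mem_inter.2 ⟨ha, ?_⟩
    refine Finset.mem_smul_finset.2 ⟨b, hb, ?_⟩
    rw [smul_eq_mul, hgdef]
    group
  have hxa : x ≠ a := by
    intro hxa
    apply hh
    rw [hxa] at hac
    have : a * d = a * 1 := by rw [mul_one]; exact hac
    exact mul_left_cancel this
  have : 1 < (A ∩ g • A).card := Finset.one_lt_card.2 ⟨x, hxg, a, hag, hxa⟩
  have := hL g hg
  omega

lemma union_bound {ι : Type*} [DecidableEq ι] (s : Finset ι) (f : ι → Finset G)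
    (hpair : ∀ i ∈ s, ∀ j ∈ s, i ≠ j → (f i ∩ f j).card ≤ 1) :
    2 * ∑ i ∈ s, (f i).card ≤ 2 * (s.biUnion f).card + s.card * (s.card - 1) := by
  induction s using Finset.induction_on with
  | empty => simp
  | @insert a s hnotmem ih =>
    have hpair' : ∀ i ∈ s, ∀ j ∈ s, i ≠ j → (f i ∩ f j).card ≤ 1 := by
      intro i hi j hj hij
      exact hpair i (Finset.mem_insert_of_mem hi) j (Finset.mem_insert_of_mem hj) hij
    have ih' := ih hpair'
    have hcap : (f a ∩ s.biUnion f).card ≤ s.card := by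
      have hsub : f a ∩ s.biUnion f ⊆ s.biUnion (fun i => f a ∩ f i) := by
        intro x hx
        obtain ⟨hx1, hx2⟩ := Finset.mem_inter.1 hx
        obtain ⟨i, hi, hx3⟩ := Finset.mem_biUnion.1 hx2
        exact Finset.mem_biUnion.2 ⟨i, hi, Finset.mem_inter.2 ⟨hx1, hx3⟩⟩
      calc (f a ∩ s.biUnion f).card ≤ (s.biUnion (fun i => f a ∩ f i)).card :=
            Finset.card_le_card hsub
        _ ≤ ∑ i ∈ s, (f a ∩ f i).card := Finset.card_biUnion_le
        _ ≤ ∑ _i ∈ s, 1 := by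
            refine Finset.sum_le_sum ?_
            intro i hi
            exact hpair a (Finset.mem_insert_self a s) i (Finset.mem_insert_of_mem hi)
              (by rintro rfl; exact hnotmem hi)
        _ = s.card := by simp
    have hunion : ((insert a s).biUnion f).card + (f a ∩ s.biUnion f).card
        = (f a).card + (s.biUnion f).card := by
      rw [Finset.biUnion_insert]
      exact Finset.card_union_add_card_inter _ _
    rw [Finset.sum_insert hnotmem, Finset.card_insert_of_notMem hnotmem]
    have hn : (s.card + 1) * (s.card + 1 - 1) = s.card * (s.card - 1) + 2 * s.card := by
      cases s.card with
      | zero => simp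
      | succ n => simp [Nat.succ_sub_one]; ring
    omega

lemma exists_atom (M : Finset G) (hM : M.Nonempty) (X₀ : Finset G) (hX₀ : 2 ≤ X₀.card) :
    ∃ V : Finset G, IsNAtom 2 M V := by
  have key : ∀ X : Finset G, X.card ≤ (X * M).card :=
    fun X => Finset.card_le_card_mul_right hM
  set S : Set ℕ := {n : ℕ | ∃ X : Finset G, 2 ≤ X.card ∧ (X * M).card = X.card + n} with hS
  have hSne : S.Nonempty := ⟨(X₀ * M).card - X₀.card, X₀, hX₀, by have := key X₀; omega⟩
  obtain ⟨X₁, hX₁c, hX₁⟩ := Nat.sInf_mem hSne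
  set T : Set ℕ := {c : ℕ | ∃ X : Finset G, X.card = c ∧ 2 ≤ X.card ∧
      (X * M).card = X.card + sInf S} with hT
  have hTne : T.Nonempty := ⟨X₁.card, X₁, rfl, hX₁c, hX₁⟩
  obtain ⟨V, hVc, hV2, hVκ⟩ := Nat.sInf_mem hTne
  refine ⟨V, ⟨⟨hV2, ?_⟩, ?_⟩⟩
  · intro X hX
    have hXS : (X * M).card - X.card ∈ S := ⟨X, hX, by have := key X; omega⟩
    have h1 := Nat.sInf_le hXS
    have h2 := key X
    have h3 := key V
    omega
  · intro V' hV'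
    have h1 := hV'.2 V hV2
    have h2 : (V' * M).card - V'.card ∈ S := ⟨V', hV'.1, by have := key V'; omega⟩
    have h3 := Nat.sInf_le h2
    have h4 := key V'
    have h5 : (V' * M).card = V'.card + sInf S := by
      push_cast at h1
      omega
    have h6 : V'.card ∈ T := ⟨V', rfl, hV'.1, h5⟩
    have := Nat.sInf_le h6
    omega

lemma inv_inter_smul_card (U : Finset G) (g : G) :
    (U⁻¹ ∩ g • U⁻¹).card = (U ∩ (U * {g⁻¹})).card := by
  have heq : U⁻¹ ∩ g • U⁻¹ = (U ∩ (U * {g⁻¹}))⁻¹ := by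
    ext x
    simp only [Finset.mem_inter, Finset.mem_inv', Finset.mem_smul_finset, Finset.mem_mul,
      Finset.mem_singleton, smul_eq_mul]
    constructor
    · rintro ⟨h1, y, hy, rfl⟩
      refine ⟨h1, y⁻¹, hy, g⁻¹, rfl, ?_⟩
      group
    · rintro ⟨h1, u, hu, c, rfl, hc⟩
      refine ⟨h1, u⁻¹, by simpa using hu, ?_⟩
      have hx : x = (u * g⁻¹)⁻¹ := by rw [hc]; simp
      rw [hx]
      group
  rw [heq, Finset.card_inv]

lemma pairwise_left (U : Finset G)
    (hRS : ∀ h : G, h ≠ 1 → (U ∩ (U * {h})).card ≤ 1)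
    {a b : G} (hab : a ≠ b) : ((a • U⁻¹) ∩ (b • U⁻¹)).card ≤ 1 := by
  have h1 : (a • U⁻¹) ∩ (b • U⁻¹) = a • (U⁻¹ ∩ (a⁻¹ * b) • U⁻¹) := by
    rw [Finset.smul_finset_inter, smul_smul]
    simp
  rw [h1, Finset.card_smul_finset, inv_inter_smul_card]
  apply hRS
  simp only [ne_eq, inv_eq_one, inv_mul_eq_one]
  exact hab

lemma pairwise_right (V : Finset G)
    (hRS : ∀ h : G, h ≠ 1 → (V ∩ (V * {h})).card ≤ 1)
    {b b' : G} (hbb : b ≠ b') : ((V * {b}) ∩ (V * {b'})).card ≤ 1 := by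
  have hinj : Function.Injective (fun x : G => x * b'⁻¹) := fun x y h => by
    simpa using mul_right_cancel (h : x * b'⁻¹ = y * b'⁻¹)
  have hsub : ((V * {b}) ∩ (V * {b'})).image (fun x => x * b'⁻¹)
      ⊆ V ∩ (V * {b * b'⁻¹}) := by
    intro z hz
    obtain ⟨x, hx, rfl⟩ := Finset.mem_image.1 hz
    obtain ⟨hx1, hx2⟩ := Finset.mem_inter.1 hx
    obtain ⟨v, hv, c, hc, hvc⟩ := Finset.mem_mul.1 hx1
    obtain ⟨w, hw, d, hd, hwd⟩ := Finset.mem_mul.1 hx2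
    rw [Finset.mem_singleton] at hc hd
    refine Finset.mem_inter.2 ⟨?_, ?_⟩
    · rw [← hwd, hd]; simpa using hw
    · refine Finset.mem_mul.2 ⟨v, hv, b * b'⁻¹, Finset.mem_singleton_self _, ?_⟩
      rw [← hvc, hc]; group
  calc ((V * {b}) ∩ (V * {b'})).card
      = (((V * {b}) ∩ (V * {b'})).image (fun x => x * b'⁻¹)).card :=
        (Finset.card_image_of_injective _ hinj).symm
    _ ≤ (V ∩ (V * {b * b'⁻¹})).card := Finset.card_le_card hsub
    _ ≤ 1 := hRS _ (by simpa [mul_inv_eq_one] using hbb)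

lemma mul_eq_biUnion_left (s t : Finset G) : s * t = s.biUnion (fun a => a • t) := by
  ext x
  simp only [Finset.mem_mul, Finset.mem_biUnion, Finset.mem_smul_finset, smul_eq_mul]

lemma mul_eq_biUnion_right (s t : Finset G) : s * t = t.biUnion (fun b => s * {b}) := by
  ext x
  simp only [Finset.mem_mul, Finset.mem_biUnion, Finset.mem_singleton]
  constructor
  · rintro ⟨a, ha, b, hb, rfl⟩; exact ⟨b, hb, a, ha, b, rfl, rfl⟩
  · rintro ⟨b, hb, a, ha, c, rfl, rfl⟩; exact ⟨a, ha, c, hb, rfl⟩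

end AuxHamidoune

theorem stmt6 {G : Type*} [Group G] [DecidableEq G]
    (hG : ∀ g : G, g ≠ 1 → ¬IsOfFinOrder g)
    (C : Finset G) (hC : 3 ≤ C.card) (U : Finset G) (hU : IsNAtom 2 C U)
    (k : ℕ) (hk : (U * C).card ≤ U.card + C.card + k) :
    U.card ≤ k + 3 := by
  rcases le_or_gt U.card 3 with h3 | h4
  · omega
  have hU2 : 2 ≤ U.card := by omega
  have hUne : U.Nonempty := Finset.card_pos.1 (by omega)
  have hBne : (U⁻¹ : Finset G).Nonempty := hUne.inv
  have hULS : ∀ g : G, g ≠ 1 → (U ∩ g • U).card ≤ 1 := fun g hg => atom_left_sidon hG hU hg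
  have hURS : ∀ h : G, h ≠ 1 → (U ∩ (U * {h})).card ≤ 1 := fun h hh => right_sidon_of_left hULS hh
  obtain ⟨V, hV⟩ := exists_atom (U⁻¹ : Finset G) hBne U hU2
  have hV2 : 2 ≤ V.card := hV.1.1
  have hVLS : ∀ g : G, g ≠ 1 → (V ∩ g • V).card ≤ 1 := fun g hg => atom_left_sidon hG hV hg
  have hVRS : ∀ h : G, h ≠ 1 → (V ∩ (V * {h})).card ≤ 1 := fun h hh => right_sidon_of_left hVLS hh
  have hCinv : 2 ≤ (C⁻¹ : Finset G).card := by rw [Finset.card_inv]; omega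
  have hfrag := hV.1.2 (C⁻¹ : Finset G) hCinv
  have hCB : (C⁻¹ : Finset G) * U⁻¹ = (U * C)⁻¹ := (mul_inv_rev U C).symm
  rw [hCB, Finset.card_inv, Finset.card_inv] at hfrag
  have hVBle : (V * U⁻¹).card + C.card ≤ (U * C).card + V.card := by
    have h1 := hfrag
    omega
  have hub1 : 2 * (V.card * U.card) ≤ 2 * (V * U⁻¹).card + V.card * (V.card - 1) := by
    have h := union_bound V (fun a => a • (U⁻¹ : Finset G))
      (fun i _ j _ hij => by exact pairwise_left U hURS hij)
    rw [← mul_eq_biUnion_left] at h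
    simp only [Finset.card_smul_finset, Finset.card_inv, Finset.sum_const, smul_eq_mul] at h
    omega
  have hub2 : 2 * (U.card * V.card) ≤ 2 * (V * U⁻¹).card + U.card * (U.card - 1) := by
    have h := union_bound (U⁻¹ : Finset G) (fun b => V * {b})
      (fun i _ j _ hij => by exact pairwise_right V hVRS hij)
    rw [← mul_eq_biUnion_right] at h
    simp only [Finset.card_mul_singleton, Finset.card_inv, Finset.sum_const, smul_eq_mul] at h
    omega
  have hprod : (V * U⁻¹).card ≤ U.card + k + V.card := by omega
  have h1V : 1 ≤ V.card := by omega
  have h1U : 1 ≤ U.card := by omega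
  zify [h1V, h1U] at hub1 hub2 hprod h4 hV2
  rcases le_or_gt V.card U.card with hsm | hms
  · zify at hsm
    have : (U.card : ℤ) ≤ (k : ℤ) + 3 := by
      nlinarith [mul_nonneg (by linarith : (0:ℤ) ≤ (V.card:ℤ) - 2)
          (by linarith : (0:ℤ) ≤ (U.card:ℤ) - (V.card:ℤ)),
        mul_nonneg (by linarith : (0:ℤ) ≤ (V.card:ℤ) - 2)
          (by linarith : (0:ℤ) ≤ (U.card:ℤ) - 3)]
    exact_mod_cast this
  · zify at hms
    have : (U.card : ℤ) ≤ (k : ℤ) + 3 := by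
      nlinarith [mul_nonneg (by linarith : (0:ℤ) ≤ (V.card:ℤ) - (U.card:ℤ))
          (by linarith : (0:ℤ) ≤ (U.card:ℤ) - 1),
        mul_nonneg (by linarith : (0:ℤ) ≤ (U.card:ℤ) - 2)
          (by linarith : (0:ℤ) ≤ (U.card:ℤ) - 3)]
    exact_mod_cast this
end

section
/- In a unique product group G, every n-atom for a finite nonempty set C ⊆ G has cardinality exactly n. -/
open Pointwise

/-- `G` has the unique product property. -/
def UniqueProductGroup (G : Type*) [Group G] : Prop :=
  ∀ A B : Finset G, A.Nonempty → B.Nonempty →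
    ∃ a ∈ A, ∃ b ∈ B, ∀ a' ∈ A, ∀ b' ∈ B, a' * b' = a * b → a' = a ∧ b' = b

theorem stmt12 {G : Type*} [Group G] [DecidableEq G]
    (hG : UniqueProductGroup G) (n : ℕ) (hn : 1 ≤ n)
    (C : Finset G) (hC : C.Nonempty) (U : Finset G) (hU : IsNAtom n C U) :
    U.card = n := by
  obtain ⟨⟨hcard, hmin⟩, hatom⟩ := hU
  by_contra hne
  have hlt : n < U.card := lt_of_le_of_ne hcard (Ne.symm hne)
  have hUne : U.Nonempty := Finset.card_pos.mp (lt_of_lt_of_le hn hcard)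
  obtain ⟨a, ha, c, hc, huniq⟩ := hG U C hUne hC
  set U' := U.erase a with hU'
  have hsub : U' * C ⊆ (U * C).erase (a * c) := by
    intro x hx
    rw [Finset.mem_mul] at hx
    obtain ⟨a', ha', c', hc', rfl⟩ := hx
    have ha'U : a' ∈ U := Finset.mem_of_mem_erase ha'
    refine Finset.mem_erase.mpr ⟨?_, Finset.mul_mem_mul ha'U hc'⟩
    intro h
    exact (Finset.ne_of_mem_erase ha') (huniq a' ha'U c' hc' h).1
  have hcard' : U'.card = U.card - 1 := Finset.card_erase_of_mem ha
  have hn' : n ≤ U'.card := by omega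
  have h1 : (U' * C).card ≤ ((U * C).erase (a * c)).card := Finset.card_le_card hsub
  have h2 : ((U * C).erase (a * c)).card = (U * C).card - 1 :=
    Finset.card_erase_of_mem (Finset.mul_mem_mul ha hc)
  have h3 : 1 ≤ (U * C).card := Finset.card_pos.mpr (hUne.mul hC)
  have hle : ((U' * C).card : ℤ) - U'.card ≤ ((U * C).card : ℤ) - U.card := by omega
  have hfrag : IsNFragment n C U' := ⟨hn', fun X hX => le_trans hle (hmin X hX)⟩
  have := hatom U' hfrag
  omega
end

section
/- In the Klein bottle group G₀ = ⟨u, v | u⁻¹vu = v⁻¹⟩, let A = {1, u, v} and B = {uⁱvʲ : 0 ≤ i, j ≤ m-1} for m ≥ 1. Then |B| = m² and |AB| = m² + 2m. -/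
open Pointwise

/-- The single relator `u⁻¹ v u v` of the Klein bottle group
`⟨u, v ∣ u⁻¹ v u = v⁻¹⟩`, with `u = of false`, `v = of true`. -/
def kleinRels : Set (FreeGroup Bool) :=
  {(FreeGroup.of false)⁻¹ * FreeGroup.of true * FreeGroup.of false * FreeGroup.of true}

/-- The Klein bottle group `⟨u, v ∣ u⁻¹ v u = v⁻¹⟩`. -/
abbrev KleinGroup : Type := PresentedGroup kleinRels

/-- The generator `u` of the Klein bottle group. -/
def ku : KleinGroup := PresentedGroup.of false

/-- The generator `v` of the Klein bottle group. -/
def kv : KleinGroup := PresentedGroup.of true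

/-! ### A concrete model of the Klein bottle group: `ℤ ⋉ ℤ` -/

/-- Sign `(-1)^n` as an integer. -/
def ksgn (n : ℤ) : ℤ := (((-1 : ℤˣ) ^ n : ℤˣ) : ℤ)

lemma ksgn_zero : ksgn 0 = 1 := by simp [ksgn]

lemma ksgn_one : ksgn 1 = -1 := by simp [ksgn]

lemma ksgn_add (a b : ℤ) : ksgn (a + b) = ksgn a * ksgn b := by
  simp [ksgn, zpow_add]

lemma ksgn_mul_self (a : ℤ) : ksgn a * ksgn a = 1 := by
  rw [ksgn, ← Units.val_mul, Int.units_mul_self, Units.val_one]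

lemma ksgn_add_one (a : ℤ) : ksgn (a + 1) = -ksgn a := by
  rw [ksgn_add, ksgn_one]; ring

lemma ksgn_sub_one (a : ℤ) : ksgn (a - 1) = -ksgn a := by
  have := ksgn_add_one (a - 1)
  rw [sub_add_cancel] at this
  linarith

lemma ksgn_even {a : ℤ} (h : Even a) : ksgn a = 1 := by
  rw [ksgn, Even.neg_one_zpow h, Units.val_one]

lemma ksgn_odd {a : ℤ} (h : Odd a) : ksgn a = -1 := by
  obtain ⟨k, rfl⟩ := h
  have h1 : ((-1 : ℤˣ)) ^ (2 * k) = 1 := by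
    rw [two_mul, zpow_add]
    exact Int.units_mul_self _
  rw [ksgn, zpow_add, h1, one_mul, zpow_one]
  simp

/-- The model group: pairs `(a, b)` representing `uᵃ vᵇ`, with multiplication
`(a,b)(c,d) = (a+c, (-1)^c b + d)`. -/
structure KK where
  a : ℤ
  b : ℤ

namespace KK

instance : Mul KK := ⟨fun x y => ⟨x.a + y.a, ksgn y.a * x.b + y.b⟩⟩
instance : One KK := ⟨⟨0, 0⟩⟩
instance : Inv KK := ⟨fun x => ⟨-x.a, -(ksgn x.a * x.b)⟩⟩

lemma mul_def (x y : KK) : x * y = ⟨x.a + y.a, ksgn y.a * x.b + y.b⟩ := rfl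
lemma one_def : (1 : KK) = ⟨0, 0⟩ := rfl
lemma inv_def (x : KK) : x⁻¹ = ⟨-x.a, -(ksgn x.a * x.b)⟩ := rfl

instance : Group KK :=
  Group.ofLeftAxioms
    (fun x y z => by
      simp only [mul_def, ksgn_add]
      exact congrArg₂ KK.mk (by ring) (by ring))
    (fun x => by simp [mul_def, one_def, ksgn_zero])
    (fun x => by
      simp only [mul_def, inv_def, one_def]
      exact congrArg₂ KK.mk (by ring)
        (by linear_combination (-x.b) * ksgn_mul_self x.a))

lemma u_zpow (i : ℤ) : (⟨1, 0⟩ : KK) ^ i = ⟨i, 0⟩ := by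
  induction i using Int.induction_on with
  | zero => rfl
  | succ n ih => rw [zpow_add_one, ih, mul_def]; simp
  | pred n ih =>
      rw [zpow_sub_one, ih, inv_def, mul_def]
      simp [ksgn]
      ring_nf

lemma v_zpow (j : ℤ) : (⟨0, 1⟩ : KK) ^ j = ⟨0, j⟩ := by
  induction j using Int.induction_on with
  | zero => rfl
  | succ n ih => rw [zpow_add_one, ih, mul_def]; simp [ksgn_zero]
  | pred n ih =>
      rw [zpow_sub_one, ih, inv_def, mul_def]
      simp [ksgn_zero]
      ring_nf

end KK

/-- The homomorphism from the Klein bottle group onto the concrete model. -/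
noncomputable def kphi : KleinGroup →* KK :=
  PresentedGroup.toGroup (f := fun x => if x then (⟨0, 1⟩ : KK) else ⟨1, 0⟩)
    (by
      intro r hr
      rw [kleinRels, Set.mem_singleton_iff] at hr
      subst hr
      simp only [map_mul, map_inv, FreeGroup.lift_apply_of, if_true, if_false, Bool.false_eq_true]
      rw [KK.inv_def, KK.mul_def, KK.mul_def, KK.mul_def, KK.one_def]
      simp [ksgn_zero, ksgn_one])

lemma kphi_ku : kphi ku = ⟨1, 0⟩ := PresentedGroup.toGroup.of _
lemma kphi_kv : kphi kv = ⟨0, 1⟩ := PresentedGroup.toGroup.of _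

/-- The normal-form map `(i, j) ↦ uⁱ vʲ`. -/
noncomputable def kF (p : ℤ × ℤ) : KleinGroup := ku ^ p.1 * kv ^ p.2

lemma kphi_kF (p : ℤ × ℤ) : kphi (kF p) = ⟨p.1, p.2⟩ := by
  rw [kF, map_mul, map_zpow, map_zpow, kphi_ku, kphi_kv, KK.u_zpow, KK.v_zpow, KK.mul_def]
  simp [ksgn_zero]

lemma kF_injective : Function.Injective kF := by
  intro p q h
  have h2 := congrArg kphi h
  rw [kphi_kF, kphi_kF] at h2
  injection h2 with h3 h4
  exact Prod.ext h3 h4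

lemma kF_natCast (i j : ℕ) : kF ((i : ℤ), (j : ℤ)) = ku ^ i * kv ^ j := by
  simp [kF, zpow_natCast]

/-! ### Relations in the Klein bottle group -/

lemma klein_rel1 : ku⁻¹ * kv * ku = kv⁻¹ := by
  have h1 : ku⁻¹ * kv * ku * kv = 1 := by
    have h2 : (ku⁻¹ * kv * ku * kv : KleinGroup) =
        PresentedGroup.mk kleinRels
          ((FreeGroup.of false)⁻¹ * FreeGroup.of true * FreeGroup.of false * FreeGroup.of true) :=
      by simp [ku, kv, PresentedGroup.of, map_mul, map_inv]
    rw [h2]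
    refine (QuotientGroup.eq_one_iff _).2 ?_
    exact Subgroup.subset_normalClosure rfl
  exact eq_inv_of_mul_eq_one_left h1

lemma klein_rel2 : ku * kv * ku⁻¹ = kv⁻¹ := by
  have h : kv = ku * kv⁻¹ * ku⁻¹ := by rw [← klein_rel1]; group
  calc ku * kv * ku⁻¹ = (ku * kv⁻¹ * ku⁻¹)⁻¹ := by group
    _ = kv⁻¹ := by rw [← h]

lemma klein_conj_pos (s : ℤ) : ku⁻¹ * kv ^ s * ku = kv ^ (-s) := by
  have h := (conj_zpow (i := s) (a := ku⁻¹) (b := kv)).symm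
  rw [inv_inv] at h
  rw [h, klein_rel1, inv_zpow, zpow_neg]

lemma klein_conj_neg (s : ℤ) : ku * kv ^ s * ku⁻¹ = kv ^ (-s) := by
  have h := (conj_zpow (i := s) (a := ku) (b := kv)).symm
  rw [h, klein_rel2, inv_zpow, zpow_neg]

lemma kv_zpow_mul_ku (s : ℤ) : kv ^ s * ku = ku * kv ^ (-s) := by
  rw [← klein_conj_pos s]; group

lemma kv_zpow_mul_ku_inv (s : ℤ) : kv ^ s * ku⁻¹ = ku⁻¹ * kv ^ (-s) := by
  rw [← klein_conj_neg s]; group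

lemma kv_zpow_mul_ku_zpow (i s : ℤ) : kv ^ s * ku ^ i = ku ^ i * kv ^ (ksgn i * s) := by
  induction i using Int.induction_on with
  | zero => simp [ksgn_zero]
  | succ n ih =>
      rw [zpow_add_one, ← mul_assoc, ih, mul_assoc, kv_zpow_mul_ku, ← mul_assoc,
        ← zpow_add_one, ksgn_add_one]
      ring_nf
  | pred n ih =>
      rw [zpow_sub_one, ← mul_assoc, ih, mul_assoc, kv_zpow_mul_ku_inv, ← mul_assoc,
        ← zpow_sub_one, ksgn_sub_one]
      ring_nf

lemma ku_mul_kF (i j : ℤ) : ku * kF (i, j) = kF (i + 1, j) := by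
  have h : ku * ku ^ i = ku ^ (i + 1) := by rw [add_comm, zpow_add, zpow_one]
  rw [kF, kF, ← mul_assoc, h]

lemma kv_mul_kF (i j : ℤ) : kv * kF (i, j) = kF (i, ksgn i + j) := by
  have h : kv * ku ^ i = ku ^ i * kv ^ (ksgn i) := by
    have := kv_zpow_mul_ku_zpow i 1
    rwa [zpow_one, mul_one] at this
  rw [kF, kF, ← mul_assoc, h, mul_assoc, ← zpow_add]

/-! ### The counting argument -/

theorem stmt13 (m : ℕ) (hm : 1 ≤ m) :
    ({x : KleinGroup | ∃ i < m, ∃ j < m, x = ku ^ i * kv ^ j} : Set KleinGroup).ncard = m ^ 2 ∧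
    (({1, ku, kv} : Set KleinGroup) *
        {x : KleinGroup | ∃ i < m, ∃ j < m, x = ku ^ i * kv ^ j}).ncard = m ^ 2 + 2 * m := by
  classical
  set S : Set KleinGroup := {x : KleinGroup | ∃ i < m, ∃ j < m, x = ku ^ i * kv ^ j} with hS
  set Bfin : Finset (ℤ × ℤ) := Finset.Ico (0 : ℤ) m ×ˢ Finset.Ico (0 : ℤ) m with hBfin
  have hmemS : ∀ x, x ∈ S ↔ ∃ p ∈ Bfin, kF p = x := by
    intro x
    constructor
    · rintro ⟨i, hi, j, hj, rfl⟩
      refine ⟨((i : ℤ), (j : ℤ)), ?_, kF_natCast i j⟩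
      simp only [hBfin, Finset.mem_product, Finset.mem_Ico]
      refine ⟨⟨by positivity, by exact_mod_cast hi⟩, ⟨by positivity, by exact_mod_cast hj⟩⟩
    · rintro ⟨⟨a, b⟩, hp, rfl⟩
      simp only [hBfin, Finset.mem_product, Finset.mem_Ico] at hp
      refine ⟨a.toNat, by omega, b.toNat, by omega, ?_⟩
      rw [← kF_natCast]
      congr 1
      simp [Int.toNat_of_nonneg hp.1.1, Int.toNat_of_nonneg hp.2.1]
  have hSeq : S = ↑(Bfin.image kF) := by
    ext x
    rw [hmemS x]
    simp
  have hBcard : Bfin.card = m * m := by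
    rw [hBfin, Finset.card_product, Int.card_Ico]
    simp
  have hS_ncard : S.ncard = m ^ 2 := by
    rw [hSeq, Set.ncard_coe_finset, Finset.card_image_of_injective _ kF_injective, hBcard]
    ring
  refine ⟨hS_ncard, ?_⟩
  set Tfin : Finset (ℤ × ℤ) :=
    (Finset.Ico (0 : ℤ) (m + 1) ×ˢ Finset.Ico (0 : ℤ) m) ∪
      (Finset.Ico (0 : ℤ) m).image (fun i => (i, if Even i then (m : ℤ) else -1)) with hTfin
  have hprod : ({1, ku, kv} : Set KleinGroup) * S = ↑(Tfin.image kF) := by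
    ext x
    rw [Set.mem_mul]
    simp only [Finset.coe_image, Set.mem_image, Finset.mem_coe]
    constructor
    · rintro ⟨a, ha, b, hb, rfl⟩
      obtain ⟨p, hp, rfl⟩ := (hmemS b).1 hb
      obtain ⟨pa, pb⟩ := p
      simp only [hBfin, Finset.mem_product, Finset.mem_Ico] at hp
      simp only [Set.mem_insert_iff, Set.mem_singleton_iff] at ha
      rcases ha with rfl | rfl | rfl
      · refine ⟨(pa, pb), ?_, (one_mul _).symm⟩
        simp only [hTfin, Finset.mem_union, Finset.mem_product, Finset.mem_Ico]
        left; omega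
      · refine ⟨(pa + 1, pb), ?_, (ku_mul_kF pa pb).symm⟩
        simp only [hTfin, Finset.mem_union, Finset.mem_product, Finset.mem_Ico]
        left; omega
      · rw [kv_mul_kF]
        rcases Int.even_or_odd pa with he | ho
        · rw [ksgn_even he]
          by_cases hc : 1 + pb = m
          · refine ⟨(pa, (m : ℤ)), ?_, by rw [hc]⟩
            simp only [hTfin, Finset.mem_union, Finset.mem_image, Finset.mem_Ico]
            right
            exact ⟨pa, by omega, by rw [if_pos he]⟩
          · refine ⟨(pa, 1 + pb), ?_, rfl⟩
            simp only [hTfin, Finset.mem_union, Finset.mem_product, Finset.mem_Ico]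
            left; omega
        · rw [ksgn_odd ho]
          by_cases hc : (0 : ℤ) ≤ -1 + pb
          · refine ⟨(pa, -1 + pb), ?_, rfl⟩
            simp only [hTfin, Finset.mem_union, Finset.mem_product, Finset.mem_Ico]
            left; omega
          · have hpb : pb = 0 := by omega
            refine ⟨(pa, (-1 : ℤ)), ?_, by rw [hpb, add_zero]⟩
            simp only [hTfin, Finset.mem_union, Finset.mem_image, Finset.mem_Ico]
            right
            refine ⟨pa, by omega, ?_⟩
            rw [if_neg (by simpa [Int.not_even_iff_odd] using ho)]
    · rintro ⟨p, hp, rfl⟩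
      simp only [hTfin, Finset.mem_union, Finset.mem_product, Finset.mem_Ico,
        Finset.mem_image] at hp
      rcases hp with ⟨⟨ha0, ham⟩, hb0, hbm⟩ | ⟨i, hi, hpi⟩
      · obtain ⟨pa, pb⟩ := p
        simp only at ha0 ham hb0 hbm
        by_cases hpam : pa < m
        · refine ⟨1, by simp, kF (pa, pb), ?_, one_mul _⟩
          refine (hmemS _).2 ⟨(pa, pb), ?_, rfl⟩
          simp only [hBfin, Finset.mem_product, Finset.mem_Ico]
          omega
        · refine ⟨ku, by simp, kF (pa - 1, pb), ?_, ?_⟩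
          · refine (hmemS _).2 ⟨(pa - 1, pb), ?_, rfl⟩
            simp only [hBfin, Finset.mem_product, Finset.mem_Ico]
            omega
          · rw [ku_mul_kF, sub_add_cancel]
      · by_cases he : Even i
        · refine ⟨kv, by simp, kF (i, (m : ℤ) - 1), ?_, ?_⟩
          · refine (hmemS _).2 ⟨(i, (m : ℤ) - 1), ?_, rfl⟩
            simp only [hBfin, Finset.mem_product, Finset.mem_Ico]
            omega
          · rw [kv_mul_kF, ksgn_even he, ← hpi, if_pos he]
            have h1 : (1 : ℤ) + ((m : ℤ) - 1) = (m : ℤ) := by ring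
            rw [h1]
        · refine ⟨kv, by simp, kF (i, 0), ?_, ?_⟩
          · refine (hmemS _).2 ⟨(i, 0), ?_, rfl⟩
            simp only [hBfin, Finset.mem_product, Finset.mem_Ico]
            omega
          · rw [kv_mul_kF, ksgn_odd (Int.not_even_iff_odd.mp he), ← hpi, if_neg he, add_zero]
  have hTcard : Tfin.card = m ^ 2 + 2 * m := by
    have hdisj : Disjoint (Finset.Ico (0 : ℤ) (m + 1) ×ˢ Finset.Ico (0 : ℤ) m)
        ((Finset.Ico (0 : ℤ) m).image (fun i => (i, if Even i then (m : ℤ) else -1))) := by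
      rw [Finset.disjoint_left]
      rintro ⟨pa, pb⟩ hp1 hp2
      simp only [Finset.mem_product, Finset.mem_Ico] at hp1
      simp only [Finset.mem_image, Finset.mem_Ico] at hp2
      obtain ⟨i, hi, hpi⟩ := hp2
      have h2 : pb = (if Even i then (m : ℤ) else -1) := by
        have := congrArg Prod.snd hpi
        simpa using this.symm
      by_cases he : Even i <;> simp [he] at h2 <;> omega
    have hinj : Function.Injective (fun i : ℤ => ((i, if Even i then (m : ℤ) else -1) : ℤ × ℤ)) :=
      fun a b h => by simpa using congrArg Prod.fst h
    rw [hTfin, Finset.card_union_of_disjoint hdisj, Finset.card_product, Int.card_Ico,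
      Int.card_Ico, Finset.card_image_of_injective _ hinj, Int.card_Ico]
    have h1 : ((m : ℤ) + 1 - 0).toNat = m + 1 := by omega
    have h2 : ((m : ℤ) - 0).toNat = m := by omega
    rw [h1, h2]
    ring
  rw [hprod, Set.ncard_coe_finset, Finset.card_image_of_injective _ kF_injective, hTcard]
end

section
/- Let G be a group, B ⊆ G a finite set, u ∈ G, and suppose |B ∪ uB| ≤ |B| + d. Then the set B_u = {x ∈ B : ux ∉ B} has |B_u| ≤ d, and B meets at most d right cosets of ⟨u⟩ (provided u has infinite order). -/
open Pointwise

theorem stmt17 {G : Type*} [Group G] [DecidableEq G]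
    (B : Finset G) (u : G) (d : ℕ) (h : (B ∪ u • B).card ≤ B.card + d) :
    (B.filter fun x => u * x ∉ B).card ≤ d ∧
    (¬ IsOfFinOrder u →
      ((fun x => (Subgroup.zpowers u : Set G) * {x}) '' (B : Set G)).ncard ≤ d) := by
  have hfilt : (B.filter fun x => u * x ∉ B).card ≤ d := by
    have h1 : (B.filter fun x => u * x ∉ B).card ≤ ((u • B) \ B).card := by
      apply Finset.card_le_card_of_injOn (fun x => u * x)
      · intro x hx
        simp only [Finset.mem_coe, Finset.mem_filter] at hx
        simp only [Finset.mem_coe, Finset.mem_sdiff, Finset.mem_smul_finset, smul_eq_mul]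
        exact ⟨⟨x, hx.1, rfl⟩, hx.2⟩
      · intro a _ b _ hab; exact mul_left_cancel hab
    have h2 : ((u • B) \ B).card + B.card = ((u • B) ∪ B).card :=
      Finset.card_sdiff_add_card (u • B) B
    rw [Finset.union_comm] at h2
    omega
  refine ⟨hfilt, fun hu => ?_⟩
  set f : G → Set G := fun x => (Subgroup.zpowers u : Set G) * {x} with hf
  have key : ∀ x ∈ B, ∃ y ∈ B.filter (fun x => u * x ∉ B), f y = f x := by
    intro x hx
    have hinj : Function.Injective fun n : ℤ => u ^ n :=
      injective_zpow_iff_not_isOfFinOrder.mpr hu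
    have hSfin : Set.Finite {n : ℤ | u ^ n * x ∈ B} := by
      apply Set.Finite.of_finite_image (f := fun n => u ^ n * x)
      · exact B.finite_toSet.subset (by rintro g ⟨n, hn, rfl⟩; exact hn)
      · intro a _ b _ hab; exact hinj (mul_right_cancel hab)
    have hne : (hSfin.toFinset).Nonempty := by
      refine ⟨0, ?_⟩; simp [Set.Finite.mem_toFinset]; simpa using hx
    set m := hSfin.toFinset.max' hne with hm
    have hmem : u ^ m * x ∈ B := by
      have := hSfin.toFinset.max'_mem hne
      rw [Set.Finite.mem_toFinset] at this; exact this
    refine ⟨u ^ m * x, ?_, ?_⟩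
    · rw [Finset.mem_filter]
      refine ⟨hmem, fun hc => ?_⟩
      have : (m + 1) ∈ hSfin.toFinset := by
        rw [Set.Finite.mem_toFinset]
        show u ^ (m + 1) * x ∈ B
        rw [add_comm, zpow_one_add, mul_assoc]
        exact hc
      have := hSfin.toFinset.le_max' _ this
      omega
    · ext a
      simp only [hf, Set.mem_mul, Set.mem_singleton_iff, SetLike.mem_coe,
        Subgroup.mem_zpowers_iff]
      constructor
      · rintro ⟨v, ⟨k, rfl⟩, g, rfl, rfl⟩
        exact ⟨u ^ (k + m), ⟨k + m, rfl⟩, x, rfl, by rw [zpow_add, mul_assoc]⟩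
      · rintro ⟨v, ⟨k, rfl⟩, g, hg, rfl⟩
        rw [hg]
        refine ⟨u ^ (k - m), ⟨k - m, rfl⟩, u ^ m * x, rfl, ?_⟩
        rw [← mul_assoc, ← zpow_add, sub_add_cancel]
  have himg : f '' (B : Set G) = f '' ((B.filter fun x => u * x ∉ B) : Set G) := by
    apply Set.Subset.antisymm
    · rintro s ⟨x, hx, rfl⟩
      obtain ⟨y, hy, hfy⟩ := key x hx
      exact ⟨y, hy, hfy⟩
    · rintro s ⟨x, hx, rfl⟩
      exact ⟨x, Finset.mem_filter.mp hx |>.1, rfl⟩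
  calc (f '' (B : Set G)).ncard
      = (f '' ((B.filter fun x => u * x ∉ B) : Set G)).ncard := by rw [himg]
    _ ≤ ((B.filter fun x => u * x ∉ B) : Set G).ncard :=
        Set.ncard_image_le (Finset.finite_toSet _)
    _ = (B.filter fun x => u * x ∉ B).card := Set.ncard_coe_finset _
    _ ≤ d := hfilt
end

section
/- Let H be a group whose center Z(H) has finite index. If H is torsion-free, then H is abelian. -/
open scoped commutatorElement

private lemma comm_central_left {H : Type*} [Group H] (a b z : H)
    (hz : z ∈ Subgroup.center H) : ⁅a * z, b⁆ = ⁅a, b⁆ := by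
  have h := Subgroup.mem_center_iff.mp hz
  simp only [commutatorElement_def, mul_inv_rev]
  calc a * z * b * (z⁻¹ * a⁻¹) * b⁻¹
      = a * (z * b * z⁻¹) * a⁻¹ * b⁻¹ := by group
    _ = a * b * a⁻¹ * b⁻¹ := by rw [← h b]; group

private lemma comm_central_right {H : Type*} [Group H] (a b w : H)
    (hw : w ∈ Subgroup.center H) : ⁅a, b * w⁆ = ⁅a, b⁆ := by
  have h := Subgroup.mem_center_iff.mp hw
  simp only [commutatorElement_def, mul_inv_rev]
  calc a * (b * w) * a⁻¹ * (w⁻¹ * b⁻¹)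
      = a * b * (w * a⁻¹ * w⁻¹) * b⁻¹ := by group
    _ = a * b * a⁻¹ * b⁻¹ := by rw [← h a⁻¹]; group

theorem stmt18 {H : Type*} [Group H]
    (hfin : Finite (H ⧸ Subgroup.center H))
    (htf : Monoid.IsTorsionFree H) :
    ∀ a b : H, a * b = b * a := by
  -- commutators depend only on cosets mod center
  have key : ∀ a b : H,
      ⁅a, b⁆ = ⁅(QuotientGroup.mk (s := Subgroup.center H) a).out,
               (QuotientGroup.mk (s := Subgroup.center H) b).out⁆ := by
    intro a b
    obtain ⟨z, hz⟩ := QuotientGroup.mk_out_eq_mul (Subgroup.center H) a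
    obtain ⟨w, hw⟩ := QuotientGroup.mk_out_eq_mul (Subgroup.center H) b
    rw [hz, hw, comm_central_left _ _ _ z.2, comm_central_right _ _ _ w.2]
  -- hence the commutator set is finite
  have hfinset : Finite (commutatorSet H) := by
    have : commutatorSet H ⊆ Set.range
        (fun p : (H ⧸ Subgroup.center H) × (H ⧸ Subgroup.center H) =>
          ⁅p.1.out, p.2.out⁆) := by
      rintro x ⟨a, b, rfl⟩
      exact ⟨(QuotientGroup.mk a, QuotientGroup.mk b), (key a b).symm⟩
    exact (Set.Finite.subset (Set.finite_range _) this).to_subtype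
  -- Schur: the commutator subgroup is finite
  have hcfin : Finite (commutator H) := inferInstance
  -- a finite subgroup of a torsion-free group is trivial
  intro a b
  have hmem : ⁅a, b⁆ ∈ commutator H := Subgroup.commutator_mem_commutator
    (Subgroup.mem_top a) (Subgroup.mem_top b)
  have : (⟨⁅a, b⁆, hmem⟩ : commutator H) = 1 := by
    have := htf ⁅a, b⁆
    by_contra hne
    have ho : IsOfFinOrder (⟨⁅a, b⁆, hmem⟩ : commutator H) := isOfFinOrder_of_finite _
    obtain ⟨n, hn, hpow⟩ := isOfFinOrder_iff_pow_eq_one.mp ho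
    have : IsOfFinOrder ⁅a, b⁆ := isOfFinOrder_iff_pow_eq_one.mpr
      ⟨n, hn, by simpa [Subtype.ext_iff] using hpow⟩
    rcases eq_or_ne ⁅a, b⁆ 1 with h1 | h1
    · exact hne (Subtype.ext h1)
    · exact htf _ h1 this
  have h1 : ⁅a, b⁆ = 1 := by simpa [Subtype.ext_iff] using this
  have := commutatorElement_eq_one_iff_mul_comm.mp h1
  exact this
end
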